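/- Let Φ, Ψ, Υ be three orthogonal quantum Latin cubes of dimension d. Then Φ*, Ψ, Υ are also orthogonal quantum Latin cubes, where Φ* has entries conj(Φ_{i,j,k}). -/

import Mathlib

noncomputable section

/-- The inner product on a complex inner product space, as a function into `ℂ`. -/
def ip {E : Type*} [NormedAddCommGroup E] [InnerProductSpace ℂ E] (x y : E) : ℂ :=
  inner ℂ x y

/-- A quantum Latin cube over index set `ι` with values in the Hilbert space `E`:
every line (fixing two of the three indices) is an orthonormal basis. -/
def IsQLCOn {ι : Type*} {E : Type*} [NormedAddCommGroup E] [InnerProductSpace ℂ E]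
    (Φ : ι → ι → ι → E) : Prop :=
  (∀ j k, Orthonormal ℂ fun i => Φ i j k) ∧
  (∀ i k, Orthonormal ℂ fun j => Φ i j k) ∧
  (∀ i j, Orthonormal ℂ (Φ i j))

/-- For each fixed value of one of the three indices, the corresponding planes of the
two cubes form a pair of orthogonal quantum Latin squares. -/
def PlanesOrth {ι : Type*} [DecidableEq ι] {E : Type*} [NormedAddCommGroup E]
    [InnerProductSpace ℂ E] (Φ Ψ : ι → ι → ι → E) : Prop :=
  (∀ i, ∀ j k j' k', ip (Φ i j k) (Φ i j' k') * ip (Ψ i j k) (Ψ i j' k') =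
    if j = j' ∧ k = k' then 1 else 0) ∧
  (∀ j, ∀ i k i' k', ip (Φ i j k) (Φ i' j k') * ip (Ψ i j k) (Ψ i' j k') =
    if i = i' ∧ k = k' then 1 else 0) ∧
  (∀ k, ∀ i j i' j', ip (Φ i j k) (Φ i' j' k) * ip (Ψ i j k) (Ψ i' j' k) =
    if i = i' ∧ j = j' then 1 else 0)

/-- Three quantum Latin cubes are orthogonal: (1) the triple tensor products over all
cells form an orthonormal basis of `E ⊗ E ⊗ E`, expressed via
`⟨Φ,Φ'⟩⟨Ψ,Ψ'⟩⟨Υ,Υ'⟩ = δ_{ii'}δ_{jj'}δ_{kk'}`; and (2) every pair of corresponding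
planes of any two of the cubes is a pair of orthogonal quantum Latin squares. -/
def TripleOrthQLC {ι : Type*} [DecidableEq ι] {E : Type*} [NormedAddCommGroup E]
    [InnerProductSpace ℂ E] (Φ Ψ Υ : ι → ι → ι → E) : Prop :=
  (∀ i j k i' j' k',
    ip (Φ i j k) (Φ i' j' k') * ip (Ψ i j k) (Ψ i' j' k') * ip (Υ i j k) (Υ i' j' k') =
      if i = i' ∧ j = j' ∧ k = k' then 1 else 0) ∧
  PlanesOrth Φ Ψ ∧ PlanesOrth Φ Υ ∧ PlanesOrth Ψ Υ

/-- Entrywise complex conjugation of a vector in `ℂ^d` (in the standard basis). -/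
def conjE {ι : Type*} [Fintype ι] (v : EuclideanSpace ℂ ι) : EuclideanSpace ℂ ι :=
  WithLp.toLp 2 (fun k => star (v k))

lemma ip_conjE {ι : Type*} [Fintype ι] (u v : EuclideanSpace ℂ ι) :
    ip (conjE u) (conjE v) = star (ip u v) := by
  simp [ip, conjE, PiLp.inner_apply, star_sum, mul_comm]

lemma pair_conj {a b : ℂ} {P : Prop} [Decidable P]
    (h : a * b = if P then 1 else 0) (ha : P → a = 1) :
    star a * b = if P then 1 else 0 := by
  by_cases hP : P
  · have h1 := ha hP
    simp only [hP, if_true] at h ⊢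
    rw [h1] at h ⊢
    simpa using h
  · simp only [hP, if_false] at h ⊢
    rcases mul_eq_zero.1 h with h | h
    · simp [h]
    · simp [h]

lemma triple_conj {a b c : ℂ} {P : Prop} [Decidable P]
    (h : a * b * c = if P then 1 else 0) (ha : P → a = 1) :
    star a * b * c = if P then 1 else 0 := by
  by_cases hP : P
  · have h1 := ha hP
    simp only [hP, if_true] at h ⊢
    rw [h1] at h ⊢
    simpa using h
  · simp only [hP, if_false] at h ⊢
    rcases mul_eq_zero.1 h with h | h
    · rcases mul_eq_zero.1 h with h | h
      · simp [h]
      · simp [h]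
    · simp [h]

lemma self_ip_one {E : Type*} [NormedAddCommGroup E] [InnerProductSpace ℂ E]
    {ι : Type*} {f : ι → E} (hf : Orthonormal ℂ f) (i : ι) : ip (f i) (f i) = 1 := by
  rw [ip, @inner_self_eq_norm_sq_to_K ℂ, hf.1 i]
  norm_num

/-- If `Φ, Ψ, Υ` are three orthogonal quantum Latin cubes of dimension `d`, then so are
`Φ*, Ψ, Υ`, where `Φ*` has entries `conj (Φ_{i,j,k})`. -/
theorem conj_triple_orth_qlc {d : ℕ}
    (Φ Ψ Υ : Fin d → Fin d → Fin d → EuclideanSpace ℂ (Fin d))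
    (hΦ : IsQLCOn Φ) (hΨ : IsQLCOn Ψ) (hΥ : IsQLCOn Υ)
    (h : TripleOrthQLC Φ Ψ Υ) :
    IsQLCOn (fun i j k => conjE (Φ i j k)) ∧
    TripleOrthQLC (fun i j k => conjE (Φ i j k)) Ψ Υ := by
  obtain ⟨hΦ1, hΦ2, hΦ3⟩ := hΦ
  have hunit : ∀ i j k, ip (Φ i j k) (Φ i j k) = 1 := fun i j k =>
    self_ip_one (hΦ3 i j) k
  have hqlc : IsQLCOn (fun i j k => conjE (Φ i j k)) := by
    refine ⟨fun j k => ?_, fun i k => ?_, fun i j => ?_⟩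
    · rw [orthonormal_iff_ite]
      intro a b
      have := (orthonormal_iff_ite.1 (hΦ1 j k)) a b
      show ip (conjE (Φ a j k)) (conjE (Φ b j k)) = _
      rw [ip_conjE]
      unfold ip
      rw [this]
      split <;> simp
    · rw [orthonormal_iff_ite]
      intro a b
      have := (orthonormal_iff_ite.1 (hΦ2 i k)) a b
      show ip (conjE (Φ i a k)) (conjE (Φ i b k)) = _
      rw [ip_conjE]
      unfold ip
      rw [this]
      split <;> simp
    · rw [orthonormal_iff_ite]
      intro a b
      have := (orthonormal_iff_ite.1 (hΦ3 i j)) a b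
      show ip (conjE (Φ i j a)) (conjE (Φ i j b)) = _
      rw [ip_conjE]
      unfold ip
      rw [this]
      split <;> simp
  obtain ⟨h1, hPQ, hPU, hQU⟩ := h
  refine ⟨hqlc, ?_, ?_, ?_, hQU⟩
  · intro i j k i' j' k'
    simp only [ip_conjE]
    exact triple_conj (h1 i j k i' j' k') (by rintro ⟨rfl, rfl, rfl⟩; exact hunit i j k)
  · obtain ⟨p1, p2, p3⟩ := hPQ
    refine ⟨fun i j k j' k' => ?_, fun j i k i' k' => ?_, fun k i j i' j' => ?_⟩
    · simp only [ip_conjE]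
      exact pair_conj (p1 i j k j' k') (by rintro ⟨rfl, rfl⟩; exact hunit i j k)
    · simp only [ip_conjE]
      exact pair_conj (p2 j i k i' k') (by rintro ⟨rfl, rfl⟩; exact hunit i j k)
    · simp only [ip_conjE]
      exact pair_conj (p3 k i j i' j') (by rintro ⟨rfl, rfl⟩; exact hunit i j k)
  · obtain ⟨p1, p2, p3⟩ := hPU
    refine ⟨fun i j k j' k' => ?_, fun j i k i' k' => ?_, fun k i j i' j' => ?_⟩
    · simp only [ip_conjE]
      exact pair_conj (p1 i j k j' k') (by rintro ⟨rfl, rfl⟩; exact hunit i j k)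
    · simp only [ip_conjE]
      exact pair_conj (p2 j i k i' k') (by rintro ⟨rfl, rfl⟩; exact hunit i j k)
    · simp only [ip_conjE]
      exact pair_conj (p3 k i j i' j') (by rintro ⟨rfl, rfl⟩; exact hunit i j k)
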